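/- Assume e ∈ dcl(Σ) and fix a Lascar tuple b with e ∈ dcl(b). Let H be a subgroup of Aut_e(Σ) containing Autf_L(Σ, e) such that π_b[H] is a closed subgroup of Gal_L(Σ, e). Then for σ ∈ Aut_e(Σ), the following are equivalent: (a) σ ∈ H; (b) σ fixes all ≡^H-classes of all tuples of realizations of Σ; (c) σ fixes all ≡^H-classes of all finite tuples of realizations of Σ. Moreover, (a) and (b) are equivalent even without assuming π_b[H] closed. -/

import Mathlib

/- Framework: relativized Lascar groups of a first-order theory over a
hyperimaginary, following "Relativized Galois groups of first order theories
over a hyperimaginary" by H. Lee and J. Lee. -/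

open FirstOrder Cardinal Pointwise

universe u

namespace RelLascar

variable {L : FirstOrder.Language.{u, u}} {M : Type u} [L.Structure M]

/-- The group of automorphisms of the monster model `M`. -/
instance : Group (M ≃[L] M) where
  mul f g := f.comp g
  one := FirstOrder.Language.Equiv.refl L M
  inv f := f.symm
  mul_assoc f g h := (FirstOrder.Language.Equiv.comp_assoc h g f).symm
  one_mul := FirstOrder.Language.Equiv.refl_comp
  mul_one := FirstOrder.Language.Equiv.comp_refl
  inv_mul_cancel := FirstOrder.Language.Equiv.symm_comp_self

/-- Automorphisms act on the monster model. -/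
instance : MulAction (M ≃[L] M) M where
  smul f x := f x
  one_smul _ := rfl
  mul_smul _ _ _ := rfl

@[simp] theorem autSmul_def (f : M ≃[L] M) (x : M) : f • x = f x := rfl

/-- The solution set in `M` of a set of formulas in variables `ι` with
parameters `prm : π → M`. -/
def SolSet {ι π : Type u} (p : Set (L.Formula (ι ⊕ π))) (prm : π → M) : Set (ι → M) :=
  {v | ∀ φ ∈ p, φ.Realize (Sum.elim v prm)}

/-- A set of `ι`-tuples is type-definable over the parameters `prm`. -/
def TypeDefinableOver {ι π : Type u} (prm : π → M) (X : Set (ι → M)) : Prop :=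
  ∃ p : Set (L.Formula (ι ⊕ π)), X = SolSet p prm

/-- Two tuples have the same (complete) type over `∅`. -/
def SameTp {ι : Type u} (c d : ι → M) : Prop :=
  ∀ φ : L.Formula ι, φ.Realize c ↔ φ.Realize d

/-- `M` is a monster model with degree of saturation and strong homogeneity `κ`:
`κ` is uncountable, tuples of size `< κ` with the same type are conjugate under an
automorphism, and every partial type in `< κ` variables over `< κ` parameters that
is finitely realized in `M` is realized in `M`.  ("Small" means of size `< κ`.) -/
def IsMonster (κ : Cardinal.{u}) (L : FirstOrder.Language.{u, u}) (M : Type u) [L.Structure M] : Prop :=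
  ℵ₀ < κ ∧
  (∀ (ι : Type u) (c d : ι → M), #ι < κ → SameTp (L := L) (M := M) c d →
      ∃ f : M ≃[L] M, ∀ i, f (c i) = d i) ∧
  (∀ (ι π : Type u) (prm : π → M) (p : Set (L.Formula (ι ⊕ π))), #ι < κ → #π < κ →
      (∀ q : Finset (L.Formula (ι ⊕ π)), ↑q ⊆ p →
        ∃ v : ι → M, ∀ φ ∈ (q : Set (L.Formula (ι ⊕ π))), φ.Realize (Sum.elim v prm)) →
      ∃ v : ι → M, v ∈ SolSet p prm)

variable (κ : Cardinal.{u})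

section Hyperimaginary

/- The hyperimaginary `e = a_E`, where `E` is the `∅`-type-definable equivalence
relation defined by the set of formulas `pE` and `a : γ → M`. -/
variable {γ : Type u} (pE : Set (L.Formula (γ ⊕ γ))) (a : γ → M)

/-- The relation defined by a set of formulas in variables `δ ⊕ δ` (with no
parameters); for `pE` this is the equivalence relation `E`. -/
def Frel {δ : Type u} (pF : Set (L.Formula (δ ⊕ δ))) (x y : δ → M) : Prop :=
  ∀ φ ∈ pF, φ.Realize (Sum.elim x y)

/-- The class of a tuple `x` under the relation defined by `pF`; for an
equivalence relation this is the hyperimaginary `x_F` (as a set of representatives). -/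
def Fclass {δ : Type u} (pF : Set (L.Formula (δ ⊕ δ))) (x : δ → M) : Set (δ → M) :=
  {y | Frel pF x y}

/-- `Aut_e(𝔠)`: the subgroup of automorphisms fixing the hyperimaginary
`e = a_E` setwise. -/
def AutE : Subgroup (M ≃[L] M) := MulAction.stabilizer (M ≃[L] M) (Fclass pE a)

/-- `Aut_e(𝔠)` as a group. -/
abbrev Ge := ↥(AutE pE a)

/-- The hyperimaginary `e` is definable over the tuple `t` (i.e. `e ∈ dcl(t)`):
every automorphism fixing `t` pointwise fixes `e`. -/
def eInDclTuple {ι : Type u} (t : ι → M) : Prop :=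
  ∀ f : M ≃[L] M, (∀ i, f (t i) = t i) → f ∈ AutE pE a

/-- The set of elements of `Aut_e(𝔠)` fixing pointwise some small elementary
substructure (model) `N` with `e ∈ dcl(N)`. -/
def modelFixers : Set (Ge pE a) :=
  {f | ∃ N : L.ElementarySubstructure M, #N < κ ∧
        (∀ g : M ≃[L] M, (∀ x ∈ N, g x = x) → g ∈ AutE pE a) ∧
        ∀ x ∈ N, (f : M ≃[L] M) x = x}

/-- `Autf_L(𝔠, e)`: the normal subgroup of `Aut_e(𝔠)` generated by the
pointwise stabilizers of small models `N` with `e ∈ dcl(N)`. -/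
def AutfL : Subgroup (Ge pE a) := Subgroup.normalClosure (modelFixers κ pE a)

/-- `c ≡ᴸ_e d` : the tuples have the same Lascar strong type over `e`. -/
def LEq {ι : Type u} (c d : ι → M) : Prop := ∃ f ∈ AutfL κ pE a, f • c = d

theorem LEq.refl {ι : Type u} (c : ι → M) : LEq κ pE a c c :=
  ⟨1, one_mem _, one_smul _ _⟩

theorem LEq.symm {ι : Type u} {c d : ι → M} (h : LEq κ pE a c d) : LEq κ pE a d c := by
  obtain ⟨f, hf, rfl⟩ := h
  exact ⟨f⁻¹, inv_mem hf, inv_smul_smul f c⟩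

theorem LEq.trans {ι : Type u} {c d e : ι → M} (h1 : LEq κ pE a c d)
    (h2 : LEq κ pE a d e) : LEq κ pE a c e := by
  obtain ⟨f, hf, rfl⟩ := h1
  obtain ⟨g, hg, rfl⟩ := h2
  exact ⟨g * f, mul_mem hg hf, (mul_smul g f c).symm ▸ rfl⟩

end Hyperimaginary

section Sigma

variable {γ : Type u} (pE : Set (L.Formula (γ ⊕ γ))) (a : γ → M)
variable {V β : Type u} {pS : Set (L.Formula (V ⊕ β))} {bp : β → M}

/-- The solution set `Σ(𝔠)` of the partial type `Σ` (given by formulas `pS` over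
the parameters `bp`). -/
abbrev Sol (pS : Set (L.Formula (V ⊕ β))) (bp : β → M) : Set (V → M) := SolSet pS bp

/-- The type of realizations of `Σ`. -/
abbrev SolT (pS : Set (L.Formula (V ⊕ β))) (bp : β → M) := ↥(Sol pS bp)

variable (pS bp) in
/-- The partial type `Σ` is `e`-invariant. -/
def SolInv : Prop := ∀ (g : Ge pE a) (v : V → M), v ∈ Sol pS bp → g • v ∈ Sol pS bp

/-- The restriction homomorphism `Aut_e(𝔠) → Perm(Σ(𝔠))`, `f ↦ f ↾ Σ(𝔠)`. -/
def resPerm (hInv : SolInv pE a pS bp) : Ge pE a →* Equiv.Perm (SolT pS bp) where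
  toFun g :=
    { toFun := fun v => ⟨g • (v : V → M), hInv g v v.2⟩
      invFun := fun v => ⟨g⁻¹ • (v : V → M), hInv g⁻¹ v v.2⟩
      left_inv := fun v => Subtype.ext (inv_smul_smul g (v : V → M))
      right_inv := fun v => Subtype.ext (smul_inv_smul g (v : V → M)) }
  map_one' := Equiv.ext fun v => Subtype.ext (one_smul (Ge pE a) (v : V → M))
  map_mul' g h := Equiv.ext fun v => Subtype.ext (mul_smul g h (v : V → M))

/-- `Aut_e(Σ) = {f ↾ Σ(𝔠) : f ∈ Aut_e(𝔠)}`, as a subgroup of the permutations of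
`Σ(𝔠)`. -/
def AutES (hInv : SolInv pE a pS bp) : Subgroup (Equiv.Perm (SolT pS bp)) :=
  (resPerm pE a hInv).range

/-- `Aut_e(Σ)` as a group. -/
abbrev GS (hInv : SolInv pE a pS bp) := ↥(AutES pE a hInv)

/-- The restriction map `ξ : Aut_e(𝔠) → Aut_e(Σ)`. -/
def toGS (hInv : SolInv pE a pS bp) : Ge pE a →* GS pE a hInv :=
  (resPerm pE a hInv).rangeRestrict

/-- A tuple of realizations of `Σ`, flattened to a tuple of elements of `M`. -/
def flat {ι : Type u} (c : ι → SolT pS bp) : ι × V → M := fun p => (c p.1 : V → M) p.2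

theorem flat_toGS_smul (hInv : SolInv pE a pS bp) {ι : Type u} (g : Ge pE a)
    (c : ι → SolT pS bp) : flat ((toGS pE a hInv g) • c) = g • flat c := rfl

theorem flat_smul_of_res (hInv : SolInv pE a pS bp) {ι : Type u} {τ : GS pE a hInv}
    {g : Ge pE a} (hg : resPerm pE a hInv g = ↑τ) (c : ι → SolT pS bp) :
    flat (τ • c) = g • flat c := by
  have : τ = toGS pE a hInv g := Subtype.ext hg.symm
  subst this
  rfl

/-- `Autf_L(Σ, e)`: the subgroup of `Aut_e(Σ)` consisting of those restricted
automorphisms `σ` such that every small tuple of realizations of `Σ` has the same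
Lascar strong type over `e` as its image under `σ`. -/
def AutfLS (hInv : SolInv pE a pS bp) : Subgroup (GS pE a hInv) where
  carrier := {σ | ∀ (ι : Type u), #ι < κ → ∀ c : ι → SolT pS bp,
      LEq κ pE a (flat c) (flat (σ • c))}
  one_mem' := by
    intro ι _ c
    rw [one_smul]
    exact LEq.refl κ pE a _
  mul_mem' := by
    intro σ τ hσ hτ ι hι c
    rw [mul_smul]
    exact LEq.trans κ pE a (hτ ι hι c) (hσ ι hι (τ • c))
  inv_mem' := by
    intro σ hσ ι hι c
    have h := hσ ι hι (σ⁻¹ • c)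
    rw [smul_inv_smul] at h
    exact LEq.symm κ pE a h

theorem AutfLS_normal (hInv : SolInv pE a pS bp) : (AutfLS κ pE a hInv).Normal := by
  constructor
  intro σ hσ τ ι hι c
  obtain ⟨g, hg⟩ := τ.2
  have hginv : resPerm pE a hInv g⁻¹ = ↑τ⁻¹ := by
    rw [map_inv, hg]
    rfl
  obtain ⟨f, hf, hfe⟩ := hσ ι hι (τ⁻¹ • c)
  refine ⟨g * f * g⁻¹, (Subgroup.normalClosure_normal).conj_mem f hf g, ?_⟩
  have h1 : flat (τ⁻¹ • c) = g⁻¹ • flat c := flat_smul_of_res pE a hInv hginv c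
  have h2 : flat ((τ * σ * τ⁻¹) • c) = g • flat (σ • τ⁻¹ • c) := by
    rw [mul_smul, mul_smul]
    exact flat_smul_of_res pE a hInv hg _
  rw [h2, ← hfe, h1, ← mul_smul, ← mul_smul]

/-- The relativized Lascar group `Gal_L(Σ, e) = Aut_e(Σ) / Autf_L(Σ, e)`. -/
def GalL (hInv : SolInv pE a pS bp) := GS pE a hInv ⧸ AutfLS κ pE a hInv

/-- The projection `π_b : Aut_e(Σ) → Gal_L(Σ, e)`. -/
def projb (hInv : SolInv pE a pS bp) : GS pE a hInv → GalL κ pE a hInv :=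
  QuotientGroup.mk

/-- The projection `π_Σ : Aut_e(𝔠) → Gal_L(Σ, e)`. -/
def projS (hInv : SolInv pE a pS bp) : Ge pE a → GalL κ pE a hInv :=
  fun g => projb κ pE a hInv (toGS pE a hInv g)

/-- A Lascar tuple in `Σ` over `e`: a small tuple `b` of realizations of `Σ` such
that `Autf_L(Σ, e) = {σ ∈ Aut_e(Σ) : b ≡ᴸ_e σ(b)}`. -/
def IsLascarTuple (hInv : SolInv pE a pS bp) {ιb : Type u} (b : ιb → SolT pS bp) : Prop :=
  #ιb < κ ∧ ∀ σ : GS pE a hInv,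
    σ ∈ AutfLS κ pE a hInv ↔ LEq κ pE a (flat b) (flat (σ • b))

variable (pS bp) in
/-- `e ∈ dcl(Σ)`: there is a small tuple of realizations of `Σ` over which `e` is
definable. -/
def eInDclSigma : Prop :=
  ∃ (ι : Type u) (c : ι → SolT pS bp), #ι < κ ∧ eInDclTuple pE a (flat c)

/-- The complete type of the tuple `v` over the parameters `prm` (with both
indexed by `ι`): the set of formulas realized by `v` with parameters `prm`. -/
def tpOver {ι : Type u} (prm v : ι → M) : Set (L.Formula (ι ⊕ ι)) :=
  {φ | φ.Realize (Sum.elim v prm)}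

/-- The type space `S_b(b) = {tp(f(b)/b) : f ∈ Aut_e(𝔠)}` over a tuple `b` of
realizations of `Σ`. -/
def Sb {ιb : Type u} (b : ιb → SolT pS bp) :
    Set (Set (L.Formula ((ιb × V) ⊕ (ιb × V)))) :=
  Set.range fun g : Ge pE a => tpOver (flat b) (g • flat b)

/-- The logic topology on a set of types: the subspace topology induced from the
product topology on `Formula → Bool` via characteristic functions. -/
noncomputable def typeSetTop {F : Type u} (X : Set (Set F)) : TopologicalSpace ↥X :=
  TopologicalSpace.induced
    (fun p (φ : F) => (p : Set F).boolIndicator φ) inferInstance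

/-- The map `ν_b : S_b(b) → Gal_L(Σ, e)`, `tp(σ(b)/b) ↦ [σ]`. -/
noncomputable def nub (hInv : SolInv pE a pS bp) {ιb : Type u} (b : ιb → SolT pS bp) :
    ↥(Sb pE a b) → GalL κ pE a hInv :=
  fun p => projS κ pE a hInv (Set.mem_range.mp p.2).choose

/-- The topology `𝔱_b` on the relativized Lascar group `Gal_L(Σ, e)`: the quotient
topology induced by `ν_b` from the logic topology on `S_b(b)`. -/
noncomputable def galTopb (hInv : SolInv pE a pS bp) {ιb : Type u}
    (b : ιb → SolT pS bp) : TopologicalSpace (GalL κ pE a hInv) :=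
  (typeSetTop (Sb pE a b)).coinduced (nub κ pE a hInv b)

end Sigma

section GalT

variable {γ : Type u} (pE : Set (L.Formula (γ ⊕ γ))) (a : γ → M)

/-- The Lascar group `Gal_L(T, e) = Aut_e(𝔠) / Autf_L(𝔠, e)`. -/
def GalT := Ge pE a ⧸ AutfL κ pE a

/-- The projection `π : Aut_e(𝔠) → Gal_L(T, e)`. -/
def projT : Ge pE a → GalT κ pE a := QuotientGroup.mk

/-- The type space `S_N(N) = {tp(f(N)/N) : f ∈ Aut_e(𝔠)}` over a small model `N`. -/
def SMod (N : L.ElementarySubstructure M) : Set (Set (L.Formula (↥N ⊕ ↥N))) :=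
  Set.range fun g : Ge pE a =>
    tpOver (Subtype.val : ↥N → M) (g • (Subtype.val : ↥N → M))

/-- The map `ν : S_N(N) → Gal_L(T, e)`, `tp(f(N)/N) ↦ [f]`. -/
noncomputable def nuT (N : L.ElementarySubstructure M) :
    ↥(SMod pE a N) → GalT κ pE a :=
  fun p => projT κ pE a (Set.mem_range.mp p.2).choose

/-- The standard quotient topology on the Lascar group `Gal_L(T, e)` induced via
the type space over a small model `N` (with `e ∈ dcl(N)`). -/
noncomputable def galTopT (N : L.ElementarySubstructure M) :
    TopologicalSpace (GalT κ pE a) :=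
  (typeSetTop (SMod pE a N)).coinduced (nuT κ pE a N)

/-- `Autf_KP(𝔠, e)`: the preimage under `π` of the closure of the identity in
`Gal_L(T, e)`. -/
noncomputable def AutfKPset (N : L.ElementarySubstructure M) : Set (Ge pE a) :=
  projT κ pE a ⁻¹' (@closure _ (galTopT κ pE a N) {projT κ pE a 1})

/-- `Autf_S(𝔠, e)`: the preimage under `π` of the connected component of the
identity in `Gal_L(T, e)`. -/
noncomputable def AutfSset (N : L.ElementarySubstructure M) : Set (Ge pE a) :=
  projT κ pE a ⁻¹' (@connectedComponent _ (galTopT κ pE a N) (projT κ pE a 1))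

/-- `c ≡ᴷᴾ_e d` : the tuples have the same KP strong type over `e`. -/
def KPeq (N : L.ElementarySubstructure M) {ι : Type u} (c d : ι → M) : Prop :=
  ∃ f ∈ AutfKPset κ pE a N, f • c = d

/-- `c ≡ˢ_e d` : the tuples have the same Shelah strong type over `e`. -/
def Seq (N : L.ElementarySubstructure M) {ι : Type u} (c d : ι → M) : Prop :=
  ∃ f ∈ AutfSset κ pE a N, f • c = d

end GalT

section Relativized

variable {γ : Type u} (pE : Set (L.Formula (γ ⊕ γ))) (a : γ → M)
variable {V β : Type u} {pS : Set (L.Formula (V ⊕ β))} {bp : β → M}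

/-- `Autf_KP(Σ, e)`: the set of restricted automorphisms fixing the KP strong
type of every small tuple of realizations of `Σ`. -/
noncomputable def AutfKPSset (hInv : SolInv pE a pS bp) (N : L.ElementarySubstructure M) :
    Set (GS pE a hInv) :=
  {σ | ∀ (ι : Type u), #ι < κ → ∀ c : ι → SolT pS bp,
      KPeq κ pE a N (flat c) (flat (σ • c))}

/-- `Autf_S(Σ, e)`: the set of restricted automorphisms fixing the Shelah strong
type of every small tuple of realizations of `Σ`. -/
noncomputable def AutfSSset (hInv : SolInv pE a pS bp) (N : L.ElementarySubstructure M) :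
    Set (GS pE a hInv) :=
  {σ | ∀ (ι : Type u), #ι < κ → ∀ c : ι → SolT pS bp,
      Seq κ pE a N (flat c) (flat (σ • c))}

/-- The orbit under `Aut_e(𝔠)` of the hyperimaginary given by the class of `x`
under the relation defined by `pF` is small ("`x_F` is bounded over `e`"). -/
def BoundedClass {δ : Type u} (pF : Set (L.Formula (δ ⊕ δ))) (x : δ → M) : Prop :=
  #↥(Set.range fun g : Ge pE a => g • Fclass pF x) < κ

/-- The orbit under `Aut_e(𝔠)` of the hyperimaginary given by the class of `x` is
finite ("`x_F` is algebraic over `e`"). -/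
def FiniteClass {δ : Type u} (pF : Set (L.Formula (δ ⊕ δ))) (x : δ → M) : Prop :=
  (Set.range fun g : Ge pE a => g • Fclass pF x).Finite

/-- `f` fixes the hyperimaginary given by the class of `x` (setwise). -/
def FixesClass (f : Ge pE a) {δ : Type u} (pF : Set (L.Formula (δ ⊕ δ)))
    (x : δ → M) : Prop :=
  f • Fclass pF x = Fclass pF x

variable (pS bp) in
/-- `f` fixes every hyperimaginary that is bounded over `e` and has a
representative which is a small tuple of realizations of `Σ`, i.e. `f` fixes
`bdd(e) ∩ Σ` pointwise. -/
def fixesAllBddS (f : Ge pE a) : Prop :=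
  ∀ (ι : Type u) (pF : Set (L.Formula ((ι × V) ⊕ (ι × V)))) (c : ι → SolT pS bp),
    #ι < κ → Equivalence (Frel (M := M) pF) → BoundedClass κ pE a pF (flat c) →
    FixesClass pE a f pF (flat c)

variable (pS bp) in
/-- `f` fixes every hyperimaginary that is algebraic over `e` and has a
representative which is a small tuple of realizations of `Σ`, i.e. `f` fixes
`acl(e) ∩ Σ` pointwise. -/
def fixesAllAclS (f : Ge pE a) : Prop :=
  ∀ (ι : Type u) (pF : Set (L.Formula ((ι × V) ⊕ (ι × V)))) (c : ι → SolT pS bp),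
    #ι < κ → Equivalence (Frel (M := M) pF) → FiniteClass pE a pF (flat c) →
    FixesClass pE a f pF (flat c)

end Relativized


section More

variable {γ : Type u} (pE : Set (L.Formula (γ ⊕ γ))) (a : γ → M)
variable {V β : Type u} {pS : Set (L.Formula (V ⊕ β))} {bp : β → M}

theorem mem_AutfLS_iff (hInv : SolInv pE a pS bp) {σ : GS pE a hInv} :
    σ ∈ AutfLS κ pE a hInv ↔ ∀ (ι : Type u), #ι < κ → ∀ c : ι → SolT pS bp,
      LEq κ pE a (flat c) (flat (σ • c)) := Iff.rfl

theorem toGS_mem_autfLS (hInv : SolInv pE a pS bp) {f : Ge pE a}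
    (hf : f ∈ AutfL κ pE a) : toGS pE a hInv f ∈ AutfLS κ pE a hInv :=
  (mem_AutfLS_iff κ pE a hInv).mpr
    (fun ι _ c => ⟨f, hf, (flat_toGS_smul pE a hInv f c).symm⟩)

instance AutfL_normal : (AutfL κ pE a).Normal :=
  Subgroup.normalClosure_normal

/-- The group structure of the relativized Lascar group `Gal_L(Σ, e)`. -/
noncomputable def galLGroup (hInv : SolInv pE a pS bp) : Group (GalL κ pE a hInv) :=
  @QuotientGroup.Quotient.group _ _ (AutfLS κ pE a hInv) (AutfLS_normal κ pE a hInv)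

/-- The natural projection `ξ_L : Gal_L(T, e) → Gal_L(Σ, e)`. -/
noncomputable def xiL (hInv : SolInv pE a pS bp) : GalT κ pE a → GalL κ pE a hInv :=
  haveI := AutfLS_normal κ pE a hInv
  ⇑(QuotientGroup.map (AutfL κ pE a) (AutfLS κ pE a hInv) (toGS pE a hInv)
    (fun _ hf => Subgroup.mem_comap.mpr (toGS_mem_autfLS κ pE a hInv hf)))

/-- The orbit equivalence relation `≡ᴴ` of a set `H` of restricted automorphisms,
on tuples of realizations of `Σ`. -/
def orbEq {hInv : SolInv pE a pS bp} (H : Set (GS pE a hInv)) {ι : Type u}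
    (c d : ι → SolT pS bp) : Prop :=
  ∃ h ∈ H, h • c = d

end More



section AuxProof

variable {γ : Type u} (pE : Set (L.Formula (γ ⊕ γ))) (a : γ → M)
variable {V β : Type u} {pS : Set (L.Formula (V ⊕ β))} {bp : β → M}

theorem flat_inj {ι : Type u} {c d : ι → SolT pS bp} (h : flat c = flat d) : c = d :=
  funext fun i => Subtype.ext (funext fun v => congrFun h (i, v))

theorem bi_eq_of_iff {α : Type*} {s t : Set α} {x : α} (h : x ∈ s ↔ x ∈ t) :
    s.boolIndicator x = t.boolIndicator x := by
  by_cases hx : x ∈ s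
  · rw [(s.mem_iff_boolIndicator x).mp hx, (t.mem_iff_boolIndicator x).mp (h.mp hx)]
  · rw [(s.notMem_iff_boolIndicator x).mp hx,
      (t.notMem_iff_boolIndicator x).mp (fun ht => hx (h.mpr ht))]

theorem realize_congr_freeVar {α : Type u} [DecidableEq α] (φ : L.Formula α) {v w : α → M}
    (h : ∀ x ∈ φ.freeVarFinset, v x = w x) : φ.Realize v ↔ φ.Realize w := by
  have hv := FirstOrder.Language.BoundedFormula.realize_restrictFreeVar'
    (M := M) (φ := φ) (s := ↑φ.freeVarFinset) Set.Subset.rfl (v := v) (xs := default)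
  have hw := FirstOrder.Language.BoundedFormula.realize_restrictFreeVar'
    (M := M) (φ := φ) (s := ↑φ.freeVarFinset) Set.Subset.rfl (v := w) (xs := default)
  have hvw : v ∘ ((↑) : (↑φ.freeVarFinset : Set α) → α)
      = w ∘ ((↑) : (↑φ.freeVarFinset : Set α) → α) :=
    funext fun x => h x (by exact_mod_cast x.2)
  show FirstOrder.Language.BoundedFormula.Realize φ v default ↔
    FirstOrder.Language.BoundedFormula.Realize φ w default
  rw [← hv, ← hw, hvw]

theorem sum_prod_lt {ιb : Type u} (hκ : ℵ₀ < κ) (hιb : #ιb < κ) (hV : #V < κ) :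
    #((ιb × V) ⊕ (ιb × V)) < κ := by
  have hp : #(ιb × V) < κ := by
    rw [Cardinal.mk_prod]
    simp only [Cardinal.lift_id]
    exact Cardinal.mul_lt_of_lt hκ.le hιb hV
  rw [Cardinal.mk_sum]
  simp only [Cardinal.lift_id]
  exact Cardinal.add_lt_of_lt hκ.le hp hp

theorem projb_eq_of_tp (hM : IsMonster κ L M) (hV : #V < κ)
    (hInv : SolInv pE a pS bp) {ιb : Type u} {b : ιb → SolT pS bp}
    (hb : IsLascarTuple κ pE a hInv b) (hbdcl : eInDclTuple pE a (flat b))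
    (σ τ : GS pE a hInv)
    (h : tpOver (L := L) (flat b) (flat (σ • b)) = tpOver (L := L) (flat b) (flat (τ • b))) :
    projb κ pE a hInv σ = projb κ pE a hInv τ := by
  have hsame : SameTp (L := L) (M := M)
      (Sum.elim (flat (σ • b)) (flat b)) (Sum.elim (flat (τ • b)) (flat b)) :=
    fun φ => Set.ext_iff.mp h φ
  obtain ⟨f, hf⟩ := hM.2.1 _ _ _ (sum_prod_lt κ hM.1 hb.1 hV) hsame
  have hfb : ∀ p, f (flat b p) = flat b p := fun p => hf (Sum.inr p)
  have hfσ : ∀ p, f (flat (σ • b) p) = flat (τ • b) p := fun p => hf (Sum.inl p)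
  have fE : f ∈ AutE pE a := hbdcl f hfb
  set fG : Ge pE a := ⟨f, fE⟩ with hfGdef
  set τ' := toGS pE a hInv fG with hτ'def
  have hτ'b : flat (τ' • b) = flat b := by
    rw [hτ'def, flat_toGS_smul]
    exact funext fun p => hfb p
  have hτ'N : τ' ∈ AutfLS κ pE a hInv :=
    (hb.2 τ').mpr (by rw [hτ'b]; exact LEq.refl κ pE a _)
  have h1 : (τ' * σ) • b = τ • b := by
    apply flat_inj
    rw [mul_smul, hτ'def, flat_toGS_smul]
    exact funext fun p => hfσ p
  have hkey : τ⁻¹ * (τ' * σ) ∈ AutfLS κ pE a hInv := by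
    apply (hb.2 _).mpr
    have : flat ((τ⁻¹ * (τ' * σ)) • b) = flat b := by
      rw [mul_smul, h1, inv_smul_smul]
    rw [this]; exact LEq.refl κ pE a _
  have hN := AutfLS_normal κ pE a hInv
  have hmem : σ⁻¹ * τ ∈ AutfLS κ pE a hInv := by
    have h2 := hN.conj_mem' τ' hτ'N τ
    have h3 := inv_mem hkey
    have heq : σ⁻¹ * τ = (τ⁻¹ * (τ' * σ))⁻¹ * (τ⁻¹ * τ' * τ) := by group
    rw [heq]; exact mul_mem h3 h2
  exact (QuotientGroup.eq).mpr hmem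

theorem nub_eq (hM : IsMonster κ L M) (hV : #V < κ)
    (hInv : SolInv pE a pS bp) {ιb : Type u} {b : ιb → SolT pS bp}
    (hb : IsLascarTuple κ pE a hInv b) (hbdcl : eInDclTuple pE a (flat b))
    (σ : GS pE a hInv) (p : ↥(Sb pE a b))
    (hp : (p : Set (L.Formula ((ιb × V) ⊕ (ιb × V)))) = tpOver (L := L) (flat b) (flat (σ • b))) :
    nub κ pE a hInv b p = projb κ pE a hInv σ := by
  have hspec := (Set.mem_range.mp p.2).choose_spec
  show projb κ pE a hInv (toGS pE a hInv (Set.mem_range.mp p.2).choose) = _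
  apply projb_eq_of_tp κ pE a hM hV hInv hb hbdcl
  rw [flat_toGS_smul]
  exact hspec.trans hp

end AuxProof

section Statements

variable {γ : Type u} (pE : Set (L.Formula (γ ⊕ γ))) (a : γ → M)
variable {V β : Type u} {pS : Set (L.Formula (V ⊕ β))} {bp : β → M}


/-- Lemma 2.9(2): with `H ≤ Aut_e(Σ)` containing
`Autf_L(Σ, e)`, if `π_b[H]` is closed then for `σ ∈ Aut_e(Σ)` the following are
equivalent: (a) `σ ∈ H`; (b) `σ` fixes all `≡ᴴ`-classes of tuples of
realizations of `Σ`; (c) `σ` fixes all `≡ᴴ`-classes of finite tuples of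
realizations of `Σ`.  Moreover (a) ↔ (b) holds even without closedness. -/
theorem mem_iff_fixes_orbit_classes (hM : IsMonster κ L M) (hγ : #γ < κ)
    (hE : Equivalence (Frel (M := M) pE)) (hV : #V < κ) (hβ : #β < κ)
    (hInv : SolInv pE a pS bp)
    (hedcl : eInDclSigma κ pE a pS bp)
    {ιb : Type u} (b : ιb → SolT pS bp)
    (hb : IsLascarTuple κ pE a hInv b) (hbdcl : eInDclTuple pE a (flat b))
    (H : Subgroup (GS pE a hInv)) (hLH : AutfLS κ pE a hInv ≤ H)
    (σ : GS pE a hInv) :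
    ((@IsClosed _ (galTopb κ pE a hInv b) (projb κ pE a hInv '' ↑H)) →
      ((σ ∈ H ↔ ∀ (ι : Type u), #ι < κ → ∀ c : ι → SolT pS bp,
          orbEq (hInv := hInv) pE a (↑H) c (σ • c)) ∧
       (σ ∈ H ↔ ∀ (ι : Type u), Finite ι → ∀ c : ι → SolT pS bp,
          orbEq (hInv := hInv) pE a (↑H) c (σ • c)))) ∧
    (σ ∈ H ↔ ∀ (ι : Type u), #ι < κ → ∀ c : ι → SolT pS bp,
        orbEq (hInv := hInv) pE a (↑H) c (σ • c)) := by
  classical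
  have easy : σ ∈ H → ∀ (ι : Type u) (c : ι → SolT pS bp),
      orbEq (hInv := hInv) pE a (↑H) c (σ • c) := fun hσ ι c => ⟨σ, hσ, rfl⟩
  have back : (∀ (ι : Type u), #ι < κ → ∀ c : ι → SolT pS bp,
      orbEq (hInv := hInv) pE a (↑H) c (σ • c)) → σ ∈ H := by
    intro hyp
    obtain ⟨h, hH, hhb⟩ := hyp ιb hb.1 b
    have hmem : h⁻¹ * σ ∈ AutfLS κ pE a hInv := by
      apply (hb.2 _).mpr
      have : (h⁻¹ * σ) • b = b := by rw [mul_smul, ← hhb, inv_smul_smul]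
      rw [this]; exact LEq.refl κ pE a _
    have : σ = h * (h⁻¹ * σ) := by group
    rw [this]; exact mul_mem hH (hLH hmem)
  have backFin : (@IsClosed _ (galTopb κ pE a hInv b) (projb κ pE a hInv '' ↑H)) →
      (∀ (ι : Type u), Finite ι → ∀ c : ι → SolT pS bp,
        orbEq (hInv := hInv) pE a (↑H) c (σ • c)) → σ ∈ H := by
    intro hcl hfin
    obtain ⟨g, hg⟩ := σ.2
    have hpmem : tpOver (L := L) (flat b) (flat (σ • b)) ∈ Sb pE a b :=
      ⟨g, by rw [flat_smul_of_res pE a hInv hg b]⟩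
    set p : ↥(Sb pE a b) := ⟨_, hpmem⟩ with hpdef
    set C : Set ↥(Sb pE a b) :=
      nub κ pE a hInv b ⁻¹' (projb κ pE a hInv '' ↑H) with hCdef
    have hclC : @IsClosed _ (typeSetTop (Sb pE a b)) C :=
      (isClosed_coinduced (t := typeSetTop (Sb pE a b)) (f := nub κ pE a hInv b)).mp hcl
    have hclC' : @IsClosed _ (TopologicalSpace.induced
        (fun (q : ↥(Sb pE a b)) (φ : L.Formula ((ιb × V) ⊕ (ιb × V))) =>
          (q : Set (L.Formula ((ιb × V) ⊕ (ιb × V)))).boolIndicator φ) inferInstance) C := hclC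
    obtain ⟨K, hK, hKC⟩ := isClosed_induced_iff.mp hclC'
    set ind : ↥(Sb pE a b) → L.Formula ((ιb × V) ⊕ (ιb × V)) → Bool :=
      fun q φ => (q : Set (L.Formula ((ιb × V) ⊕ (ιb × V)))).boolIndicator φ with hinddef
    have hpK : ind p ∈ K := by
      by_contra hnp
      obtain ⟨I, u, hIu, hsub⟩ := isOpen_pi_iff.mp hK.isOpen_compl _ hnp
      set J : Finset ιb :=
        I.biUnion (fun φ => φ.freeVarFinset.image (Sum.elim Prod.fst Prod.fst)) with hJdef
      obtain ⟨h, hH, hhc⟩ := hfin (↥J) inferInstance (fun j => b j.1)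
      have hagree : ∀ i ∈ J, h • b i = σ • b i := fun i hi => congrFun hhc ⟨i, hi⟩
      obtain ⟨g', hg'⟩ := h.2
      have hqmem : tpOver (L := L) (flat b) (flat (h • b)) ∈ Sb pE a b :=
        ⟨g', by rw [flat_smul_of_res pE a hInv hg' b]⟩
      set q : ↥(Sb pE a b) := ⟨_, hqmem⟩ with hqdef
      have hmemiff : ∀ φ ∈ I,
          (φ ∈ (q : Set (L.Formula ((ιb × V) ⊕ (ιb × V)))) ↔
           φ ∈ (p : Set (L.Formula ((ιb × V) ⊕ (ιb × V))))) := by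
        intro φ hφ
        apply realize_congr_freeVar φ
        intro x hx
        match x with
        | Sum.inr y => rfl
        | Sum.inl y =>
          have hiJ : y.1 ∈ J := Finset.mem_biUnion.mpr
            ⟨φ, hφ, Finset.mem_image.mpr ⟨Sum.inl y, hx, rfl⟩⟩
          show flat (h • b) y = flat (σ • b) y
          show ((h • b y.1 : SolT pS bp) : V → M) y.2 = ((σ • b y.1 : SolT pS bp) : V → M) y.2
          rw [hagree y.1 hiJ]
      have hqpi : ind q ∈ (↑I : Set (L.Formula ((ιb × V) ⊕ (ιb × V)))).pi u := by
        intro φ hφ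
        have : ind q φ = ind p φ := bi_eq_of_iff (hmemiff φ hφ)
        rw [this]; exact (hIu φ hφ).2
      have hqKc : ind q ∈ Kᶜ := hsub hqpi
      have hqC : q ∈ C := by
        refine Set.mem_preimage.mpr ⟨h, hH, ?_⟩
        exact (nub_eq κ pE a hM hV hInv hb hbdcl h q rfl).symm
      rw [← hKC] at hqC
      exact hqKc hqC
    have hpC : p ∈ C := by rw [← hKC]; exact hpK
    obtain ⟨h, hH, hph⟩ := Set.mem_preimage.mp hpC
    have : projb κ pE a hInv h = projb κ pE a hInv σ := by
      rw [hph]; exact nub_eq κ pE a hM hV hInv hb hbdcl σ p rfl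
    have hmem : h⁻¹ * σ ∈ AutfLS κ pE a hInv := (QuotientGroup.eq).mp this
    have : σ = h * (h⁻¹ * σ) := by group
    rw [this]; exact mul_mem hH (hLH hmem)
  refine ⟨fun hcl => ⟨⟨fun hσ ι _ c => easy hσ ι c, back⟩,
    ⟨fun hσ ι _ c => easy hσ ι c, backFin hcl⟩⟩, ⟨fun hσ ι _ c => easy hσ ι c, back⟩⟩

end Statements

end RelLascar
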